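/- There exist two strictly positive joint distributions p = (p₀₀, p₀₁, p₁₀, p₁₁) and p' = (p'₀₀, p'₀₁, p'₁₀, p'₁₁) on {0,1}×{0,1}, each summing to 1 and having identical marginals (p₀₀ + p₀₁ = p'₀₀ + p'₀₁, p₀₀ + p₁₀ = p'₀₀ + p'₁₀, etc.), such that p₀₀ · p₁₁ > p₀₁ · p₁₀ while p'₀₀ · p'₁₁ < p'₀₁ · p'₁₀. Consequently, for all sufficiently small ε > 0, the margin-preserving diagonal move q(ε) = (·₀₀ + ε, ·₀₁ − ε, ·₁₀ − ε, ·₁₁ + ε) strictly increases the mutual information of p and strictly decreases the mutual information of p'. -/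

import Mathlib

private lemma key_transfer {a b ε : ℝ} (hb : 0 < b) (hab : b ≤ a) (hε : 0 < ε)
    (hεb : ε < b) :
    a * Real.log a + b * Real.log b
      < (a + ε) * Real.log (a + ε) + (b - ε) * Real.log (b - ε) := by
  set A := a + ε with hA
  set B := b - ε with hB
  have hBpos : 0 < B := by simp [hB]; linarith
  have hApos : 0 < A := by simp [hA]; linarith
  have hD : 0 < A - B := by simp [hA, hB]; linarith
  set t := (a - B) / (A - B) with ht
  set s := ε / (A - B) with hs
  have htpos : 0 < t := by
    apply div_pos _ hD; simp [hB]; linarith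
  have hspos : 0 < s := div_pos hε hD
  have hts : t + s = 1 := by
    rw [ht, hs, ← add_div, div_eq_one_iff_eq hD.ne']
    simp only [hA, hB]; ring
  have hAB : A ≠ B := by intro h; rw [h] at hD; linarith
  have hmemA : A ∈ Set.Ici (0:ℝ) := le_of_lt hApos
  have hmemB : B ∈ Set.Ici (0:ℝ) := le_of_lt hBpos
  have h1 := Real.strictConvexOn_mul_log.2 hmemA hmemB hAB htpos hspos hts
  have h2 := Real.strictConvexOn_mul_log.2 hmemA hmemB hAB hspos htpos
    (by linarith : s + t = 1)
  simp only [smul_eq_mul] at h1 h2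
  have e1 : t * A + s * B = a := by
    rw [ht, hs, div_mul_eq_mul_div, div_mul_eq_mul_div, ← add_div, div_eq_iff hD.ne']
    simp only [hA, hB]; ring
  have e2 : s * A + t * B = b := by
    rw [ht, hs, div_mul_eq_mul_div, div_mul_eq_mul_div, ← add_div, div_eq_iff hD.ne']
    simp only [hA, hB]; ring
  rw [e1] at h1
  rw [e2] at h2
  have hX : t * (A * Real.log A) + s * (A * Real.log A) = A * Real.log A := by
    rw [← add_mul, hts, one_mul]
  have hY : t * (B * Real.log B) + s * (B * Real.log B) = B * Real.log B := by
    rw [← add_mul, hts, one_mul]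
  linarith




/-- Mutual information of the `ε`-perturbed 2×2 table
`q(ε) = (p₀₀+ε, p₀₁−ε, p₁₀−ε, p₁₁+ε)`, computed against the (unchanged)
marginals `a₀ = p₀₀+p₀₁`, `a₁ = p₁₀+p₁₁`, `b₀ = p₀₀+p₁₀`, `b₁ = p₀₁+p₁₁`. -/
noncomputable def mi2x2 (p00 p01 p10 p11 ε : ℝ) : ℝ :=
  (p00 + ε) * Real.log ((p00 + ε) / ((p00 + p01) * (p00 + p10))) +
  (p01 - ε) * Real.log ((p01 - ε) / ((p00 + p01) * (p01 + p11))) +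
  (p10 - ε) * Real.log ((p10 - ε) / ((p10 + p11) * (p00 + p10))) +
  (p11 + ε) * Real.log ((p11 + ε) / ((p10 + p11) * (p01 + p11)))

/-- There exist two strictly positive 2×2 joint distributions `p` and `p'`,
each summing to 1 and with identical marginals, such that
`p₀₀·p₁₁ > p₀₁·p₁₀` while `p'₀₀·p'₁₁ < p'₀₁·p'₁₀`; consequently, for all
sufficiently small `ε > 0`, the same margin-preserving diagonal mass move
strictly increases the mutual information of `p` and strictly decreases the
mutual information of `p'`.  Hence no local rule can guarantee an MI increase. -/
theorem exists_backgrounds_mi_opposite :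
    ∃ p00 p01 p10 p11 p00' p01' p10' p11' : ℝ,
      0 < p00 ∧ 0 < p01 ∧ 0 < p10 ∧ 0 < p11 ∧
      0 < p00' ∧ 0 < p01' ∧ 0 < p10' ∧ 0 < p11' ∧
      p00 + p01 + p10 + p11 = 1 ∧
      p00' + p01' + p10' + p11' = 1 ∧
      p00 + p01 = p00' + p01' ∧
      p10 + p11 = p10' + p11' ∧
      p00 + p10 = p00' + p10' ∧
      p01 + p11 = p01' + p11' ∧
      p00 * p11 > p01 * p10 ∧
      p00' * p11' < p01' * p10' ∧
      ∃ ε₀ > 0, ∀ ε : ℝ, 0 < ε → ε < ε₀ →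
        mi2x2 p00 p01 p10 p11 ε > mi2x2 p00 p01 p10 p11 0 ∧
        mi2x2 p00' p01' p10' p11' ε < mi2x2 p00' p01' p10' p11' 0 := by
  refine ⟨0.4, 0.1, 0.1, 0.4, 0.1, 0.4, 0.4, 0.1, by norm_num, by norm_num,
    by norm_num, by norm_num, by norm_num, by norm_num, by norm_num, by norm_num,
    by norm_num, by norm_num, by norm_num, by norm_num, by norm_num, by norm_num,
    by norm_num, by norm_num, 0.1, by norm_num, ?_⟩
  intro ε hε hε1
  have expand1 : ∀ δ : ℝ, -0.4 < δ → δ < 0.1 →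
      mi2x2 0.4 0.1 0.1 0.4 δ =
        2 * ((0.4 + δ) * Real.log (0.4 + δ) + (0.1 - δ) * Real.log (0.1 - δ))
          - Real.log 0.25 := by
    intro δ h1 h2
    have ha : (0.4 : ℝ) + δ ≠ 0 := by linarith
    have hb : (0.1 : ℝ) - δ ≠ 0 := by linarith
    have hm : ((0.4 : ℝ) + 0.1) * (0.4 + 0.1) = 0.25 := by norm_num
    unfold mi2x2
    rw [show ((0.4:ℝ) + 0.1) = 0.5 by norm_num, show ((0.1:ℝ) + 0.4) = 0.5 by norm_num]
    rw [Real.log_div ha (by norm_num), Real.log_div hb (by norm_num)]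
    rw [show ((0.5:ℝ) * 0.5) = 0.25 by norm_num]
    ring
  have expand2 : ∀ δ : ℝ, -0.1 < δ → δ < 0.4 →
      mi2x2 0.1 0.4 0.4 0.1 δ =
        2 * ((0.1 + δ) * Real.log (0.1 + δ) + (0.4 - δ) * Real.log (0.4 - δ))
          - Real.log 0.25 := by
    intro δ h1 h2
    have ha : (0.1 : ℝ) + δ ≠ 0 := by linarith
    have hb : (0.4 : ℝ) - δ ≠ 0 := by linarith
    unfold mi2x2
    rw [show ((0.1:ℝ) + 0.4) = 0.5 by norm_num, show ((0.4:ℝ) + 0.1) = 0.5 by norm_num]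
    rw [Real.log_div ha (by norm_num), Real.log_div hb (by norm_num)]
    rw [show ((0.5:ℝ) * 0.5) = 0.25 by norm_num]
    ring
  constructor
  · rw [expand1 ε (by linarith) (by linarith), expand1 0 (by norm_num) (by norm_num)]
    have h := key_transfer (a := 0.4) (b := 0.1) (ε := ε) (by norm_num) (by norm_num)
      hε (by linarith)
    simp only [add_zero, sub_zero]
    linarith
  · rw [expand2 ε (by linarith) (by linarith), expand2 0 (by norm_num) (by norm_num)]
    have h := key_transfer (a := 0.4 - ε) (b := 0.1 + ε) (ε := ε)
      (by linarith) (by linarith) hε (by linarith)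
    have e1 : (0.4:ℝ) - ε + ε = 0.4 := by ring
    have e2 : (0.1:ℝ) + ε - ε = 0.1 := by ring
    rw [e1, e2] at h
    simp only [add_zero, sub_zero]
    linarith
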